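/- The Masur–Veech polynomial V Ω^{MV}_{1,1}(L₁) = π²/12 + L₁²/48; in particular MV_{1,1} = 8·V Ω^{MV}_{1,1}(0) = 2π²/3. -/

import Mathlib

open MeasureTheory Real

noncomputable section
open MeasureTheory Real Set

private lemma eval_int (n : ℕ) :
    ∫ t in Ioi (0:ℝ), t * Real.exp (-((n+1) * t)) = 1 / (n+1:ℝ)^2 := by
  have h := Real.integral_rpow_mul_exp_neg_mul_Ioi (a := 2) (r := (n+1:ℝ))
    (by norm_num) (by positivity)
  rw [setIntegral_congr_fun measurableSet_Ioi
    (fun t ht => by rw [show (2:ℝ)-1 = 1 by norm_num, Real.rpow_one])] at h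
  rw [h, Real.Gamma_two]
  rw [div_rpow one_pos.le (by positivity), Real.one_rpow,
    ← Real.rpow_natCast (n+1:ℝ) 2, mul_one]
  norm_num

private lemma integrable_term (n : ℕ) :
    Integrable (fun t => t * Real.exp (-((n+1) * t))) (volume.restrict (Ioi (0:ℝ))) := by
  have h1 := Real.GammaIntegral_convergent (s := 2) (by norm_num)
  have h2 : (0:ℝ) < n + 1 := by positivity
  rw [← mul_zero ((n:ℝ)+1), ← integrableOn_Ioi_comp_mul_left_iff _ _ h2] at h1
  have h4 : IntegrableOn (fun x => 1/((n:ℝ)+1) * (Real.exp (-((n+1)*x)) * ((n+1)*x)^((2:ℝ)-1)))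
      (Ioi 0) := h1.const_mul _
  refine h4.congr_fun (fun t ht => ?_) measurableSet_Ioi
  simp only [Set.mem_Ioi] at ht
  dsimp only
  rw [show (2:ℝ)-1 = 1 by norm_num, Real.rpow_one]
  field_simp

private lemma key_zeta_int : ∫ ℓ in Ioi (0:ℝ), ℓ / (Real.exp ℓ - 1) = π ^ 2 / 6 := by
  have hbasel : HasSum (fun n : ℕ => (1:ℝ) / ((n:ℝ)+1)^2) (π^2/6) := by
    have h := (hasSum_nat_add_iff (f := fun n : ℕ => (1:ℝ)/(n:ℝ)^2) 1).mpr
      (by simpa using hasSum_zeta_two)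
    exact h.congr_fun (fun n => by push_cast; ring_nf)
  have hnorm : ∀ n : ℕ, (∫ t in Ioi (0:ℝ), ‖t * Real.exp (-((n+1) * t))‖) = 1/((n:ℝ)+1)^2 := by
    intro n
    rw [← eval_int n]
    refine setIntegral_congr_fun measurableSet_Ioi (fun t ht => ?_)
    have ht' : 0 < t := ht
    rw [Real.norm_eq_abs, abs_of_nonneg (by positivity)]
  have hinterchange := integral_tsum_of_summable_integral_norm
    (μ := volume.restrict (Ioi (0:ℝ))) (F := fun (n : ℕ) t => t * Real.exp (-((n+1) * t)))
    integrable_term (by simpa only [hnorm] using hbasel.summable)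
  have hpt : ∀ t ∈ Ioi (0:ℝ),
      (∑' n : ℕ, t * Real.exp (-((n+1) * t))) = t / (Real.exp t - 1) := by
    intro t ht
    simp only [Set.mem_Ioi] at ht
    have hr : Real.exp (-t) < 1 := Real.exp_lt_one_iff.mpr (by linarith)
    have hr0 : (0:ℝ) ≤ Real.exp (-t) := (Real.exp_pos _).le
    have heq : ∀ n : ℕ, t * Real.exp (-((n+1) * t)) = (t * Real.exp (-t)) * Real.exp (-t) ^ n := by
      intro n
      rw [← Real.exp_nat_mul, mul_assoc, ← Real.exp_add]
      congr 1
      ring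
    rw [tsum_congr heq, tsum_mul_left, tsum_geometric_of_lt_one hr0 hr]
    have h1 : Real.exp t - 1 ≠ 0 := by
      have := Real.exp_lt_exp.mpr (show (0:ℝ) < t by linarith)
      simp only [Real.exp_zero] at this; linarith
    have h2 : 1 - Real.exp (-t) ≠ 0 := by linarith
    rw [Real.exp_neg]
    have h3 : Real.exp t ≠ 0 := (Real.exp_pos t).ne'
    field_simp
  rw [← setIntegral_congr_fun measurableSet_Ioi hpt, ← hinterchange,
    tsum_congr (fun n : ℕ => eval_int n)]
  exact hbasel.tsum_eq


/-- The Kontsevich volume `VΩ^K_{0,3} = 1`. -/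
def VOmegaK03 (_ _ _ : ℝ) : ℝ := 1

/-- The Masur–Veech polynomial `VΩ^{MV}_{1,1}`: the sum over the stable graphs of type
`(1,1)` — the one-vertex genus-one graph, contributing `VΩ^K_{1,1}(L₁) = L₁²/48`, and the
graph with one genus-zero vertex and a loop (automorphism group of order `2`),
contributing `(1/2)∫₀^∞ VΩ^K_{0,3}(ℓ,ℓ,L₁)·ℓ dℓ/(e^ℓ−1)`. -/
def VOmegaMV11 (L : ℝ) : ℝ :=
  L ^ 2 / 48 +
    (1 / 2) * ∫ ℓ in Set.Ioi (0 : ℝ), VOmegaK03 ℓ ℓ L * (ℓ / (Real.exp ℓ - 1))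

/-- `VΩ^{MV}_{1,1}(L₁) = π²/12 + L₁²/48`; in particular
`MV_{1,1} = 8·VΩ^{MV}_{1,1}(0) = 2π²/3`. -/
theorem VOmegaMV11_eq :
    (∀ L : ℝ, VOmegaMV11 L = π ^ 2 / 12 + L ^ 2 / 48) ∧
      8 * VOmegaMV11 0 = 2 * π ^ 2 / 3 := by
  have h : ∀ L : ℝ, VOmegaMV11 L = π ^ 2 / 12 + L ^ 2 / 48 := by
    intro L
    unfold VOmegaMV11 VOmegaK03
    simp only [one_mul]
    rw [key_zeta_int]
    ring
  exact ⟨h, by rw [h 0]; ring⟩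

end
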